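/- Let R be a p-adically complete ring with Frobenius lift σ, and let z_1, ..., z_k ∈ R have reductions mod p that are linearly independent over F_p. Then every sequence of the form c_n = Σ_{i=1}^k λ_i^{σ^{-n}} z_i (λ_i ∈ R) satisfies the twist-recurrence relation given by expanding along the bottom row the determinant of the (k+1)×(k+1) matrix whose first k rows are (z_i, z_i^σ, ..., z_i^{σ^k}) and last row is (c_n, c_{n+1}^σ, ..., c_{n+k}^{σ^k}); moreover the leading coefficient d_k = det(z_i^{σ^{j-1}}) of this relation is a unit in R. -/
import Mathlib

open Polynomial in
/-- The Moore determinant of `𝔽_p`-linearly independent elements is nonzero. -/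
private lemma moore_det_ne_zero {K : Type*} [Field K] (p : ℕ) [Fact p.Prime] [CharP K p]
    (k : ℕ) (zb : Fin k → K)
    (hinj : Function.Injective fun c : Fin k → ZMod p => ∑ i, (c i).val • zb i) :
    (Matrix.of fun i j : Fin k => zb i ^ p ^ (j : ℕ)).det ≠ 0 := by
  have hp : p.Prime := Fact.out
  classical
  intro hdet
  obtain ⟨a, ha, hva⟩ := (Matrix.exists_mulVec_eq_zero_iff).2 hdet
  obtain ⟨j₀, hj₀⟩ := Function.ne_iff.1 ha
  haveI : ExpChar K p := .prime hp
  set g : K →+ K := ∑ j : Fin k,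
    (AddMonoidHom.mulLeft (a j)).comp (iterateFrobenius K p (j : ℕ)).toAddMonoidHom with hg
  have hgdef : ∀ x : K, g x = ∑ j : Fin k, a j * x ^ p ^ (j : ℕ) := by
    intro x
    simp [hg, AddMonoidHom.finset_sum_apply, iterateFrobenius_def]
  have hgz : ∀ i, g (zb i) = 0 := by
    intro i
    have h1 := congrFun hva i
    simp only [Matrix.mulVec, dotProduct, Matrix.of_apply, Pi.zero_apply] at h1
    rw [hgdef, ← h1]
    exact Finset.sum_congr rfl fun j _ => mul_comm _ _
  set f : K[X] := ∑ j : Fin k, C (a j) * X ^ (p ^ (j : ℕ)) with hf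
  have heval : ∀ x, f.eval x = g x := by
    intro x
    rw [hf, hgdef]
    simp [eval_finset_sum]
  have hcoeff : f.coeff (p ^ (j₀ : ℕ)) = a j₀ := by
    rw [hf, finset_sum_coeff]
    rw [Finset.sum_eq_single j₀]
    · simp [coeff_C_mul, coeff_X_pow]
    · intro j _ hne
      have hppow : (p : ℕ) ^ (j₀ : ℕ) ≠ p ^ (j : ℕ) := fun h =>
        hne (Fin.ext (Nat.pow_right_injective hp.two_le h)).symm
      simp [coeff_C_mul, coeff_X_pow, hppow]
    · simp
  have hj₀ne : a j₀ ≠ 0 := hj₀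
  have hfne : f ≠ 0 := fun h0 => hj₀ne (by simpa [h0] using hcoeff.symm)
  have hk : 0 < k := j₀.pos
  have hdeg : f.natDegree ≤ p ^ (k - 1) := by
    apply Polynomial.natDegree_sum_le_of_forall_le
    intro j _
    refine (natDegree_C_mul_le _ _).trans ?_
    rw [natDegree_X_pow]
    exact Nat.pow_le_pow_right hp.pos (by omega)
  have hroot : ∀ cc : Fin k → ZMod p, f.eval (∑ i, (cc i).val • zb i) = 0 := by
    intro cc
    rw [heval, map_sum]
    simp only [map_nsmul, hgz, smul_zero, Finset.sum_const_zero]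
  set S := Finset.image (fun cc : Fin k → ZMod p => ∑ i, (cc i).val • zb i) Finset.univ with hS
  have hScard : S.card = p ^ k := by
    rw [hS, Finset.card_image_of_injective _ hinj, Finset.card_univ]
    simp [ZMod.card]
  have hsub : S ⊆ f.roots.toFinset := by
    intro x hx
    rw [Multiset.mem_toFinset, mem_roots hfne]
    obtain ⟨cc, _, rfl⟩ := Finset.mem_image.1 hx
    exact hroot cc
  have hle : p ^ k ≤ p ^ (k - 1) := by
    calc p ^ k = S.card := hScard.symm
      _ ≤ f.roots.toFinset.card := Finset.card_le_card hsub
      _ ≤ Multiset.card f.roots := Multiset.toFinset_card_le _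
      _ ≤ f.natDegree := f.card_roots'
      _ ≤ p ^ (k - 1) := hdeg
  have hlt : p ^ (k - 1) < p ^ k := Nat.pow_lt_pow_right hp.one_lt (by omega)
  omega

/-- The determinantal twist-recurrence relation: let `R` be a `p`-adically complete and
separated ring with algebraically closed residue field and Frobenius lift `σ`, and let
`z_1, …, z_k ∈ R` reduce mod `p` to `𝔽_p`-linearly independent elements.  Every sequence
`c_n = Σ_i λ_i^{σ^{-n}} z_i` makes the `(k+1) × (k+1)` determinant with rows
`(z_i, z_i^σ, …, z_i^{σ^k})` and bottom row `(c_n, c_{n+1}^σ, …, c_{n+k}^{σ^k})` vanish;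
expanding along the bottom row, this is a twist-recurrence relation whose leading
coefficient `det (z_i^{σ^{j-1}})` is a unit of `R`. -/
theorem determinantal_twist_recurrence {R : Type*} [CommRing R] (p : ℕ)
    [Fact (Nat.Prime p)] [IsAdicComplete (Ideal.span {(p : R)}) R]
    (hfield : IsField (R ⧸ Ideal.span {(p : R)}))
    (halg : letI := hfield.toField; IsAlgClosed (R ⧸ Ideal.span {(p : R)}))
    (σ : R ≃+* R)
    (hσ : ∀ x : R, Ideal.Quotient.mk (Ideal.span {(p : R)}) (σ x) =
      Ideal.Quotient.mk (Ideal.span {(p : R)}) (x ^ p))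
    (k : ℕ) (z : Fin k → R)
    (hz : ∀ c : Fin k → ℤ, (∑ i, c i • z i) ∈ Ideal.span {(p : R)} →
      ∀ i, (c i : ZMod p) = 0)
    (lam : Fin k → R) (c : ℕ → R)
    (hc : ∀ n, c n = ∑ i, (⇑σ.symm)^[n] (lam i) * z i) :
    (∀ n : ℕ,
      Matrix.det (Matrix.of fun i j : Fin (k + 1) =>
        if h : (i : ℕ) < k then (⇑σ)^[(j : ℕ)] (z ⟨i, h⟩)
        else (⇑σ)^[(j : ℕ)] (c (n + (j : ℕ)))) = 0) ∧
    IsUnit (Matrix.det (Matrix.of fun i j : Fin k => (⇑σ)^[(j : ℕ)] (z i))) := by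
  have hp : p.Prime := Fact.out
  set I : Ideal R := Ideal.span {(p : R)} with hI
  let mk := Ideal.Quotient.mk I
  -- iterates of σ are ring homomorphisms
  have hhom : ∀ j : ℕ, ∃ φ : R →+* R, ⇑φ = (⇑σ)^[j] := fun j =>
    ⟨(σ : R →+* R) ^ j, by rw [RingHom.coe_pow]; rfl⟩
  -- cancellation
  have cancel : ∀ (j : ℕ) (x : R), (⇑σ)^[j] ((⇑σ.symm)^[j] x) = x := by
    intro j
    induction j with
    | zero => intro x; simp
    | succ j ih =>
      intro x
      rw [Function.iterate_succ_apply, Function.iterate_succ_apply' (⇑σ.symm),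
        RingEquiv.apply_symm_apply, ih]
  -- key identity for the bottom row
  have key : ∀ n j : ℕ, (⇑σ)^[j] (c (n + j)) =
      ∑ i, (⇑σ.symm)^[n] (lam i) * (⇑σ)^[j] (z i) := by
    intro n j
    obtain ⟨φ, hφ⟩ := hhom j
    rw [hc, ← hφ, map_sum]
    refine Finset.sum_congr rfl fun i _ => ?_
    rw [map_mul, hφ]
    congr 1
    rw [add_comm n j, Function.iterate_add_apply, cancel]
  constructor
  · -- the determinant vanishes
    intro n
    set M : Matrix (Fin (k + 1)) (Fin (k + 1)) R := Matrix.of fun i j : Fin (k + 1) =>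
      if h : (i : ℕ) < k then (⇑σ)^[(j : ℕ)] (z ⟨i, h⟩)
      else (⇑σ)^[(j : ℕ)] (c (n + (j : ℕ))) with hM
    set w : Fin (k + 1) → R := fun j' =>
      if h : (j' : ℕ) < k then (⇑σ.symm)^[n] (lam ⟨j', h⟩) else 0 with hw
    have hrow : M = M.updateRow (Fin.last k) (∑ j', w j' • M j') := by
      ext i j
      rcases eq_or_ne i (Fin.last k) with rfl | hne
      · rw [Matrix.updateRow_self]
        have hlastlt : ¬ ((Fin.last k : Fin (k + 1)) : ℕ) < k := by simp
        have hLHS : M (Fin.last k) j = (⇑σ)^[(j : ℕ)] (c (n + (j : ℕ))) := by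
          simp [hM, hlastlt]
        rw [hLHS, key n j]
        simp only [Finset.sum_apply, Pi.smul_apply]
        rw [Fin.sum_univ_castSucc (f := fun j' => w j' • M j' j)]
        have hwlast : w (Fin.last k) = 0 := by simp [hw]
        rw [hwlast, zero_smul, add_zero]
        refine Finset.sum_congr rfl fun i _ => ?_
        have hilt : ((Fin.castSucc i : Fin (k + 1)) : ℕ) < k := by simp [i.isLt]
        simp [hw, hM, smul_eq_mul, i.isLt]
      · rw [Matrix.updateRow_ne hne]
    conv_lhs => rw [hrow]
    rw [Matrix.det_updateRow_sum]
    have : w (Fin.last k) = 0 := by simp [hw]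
    rw [this, zero_smul]
  · -- the Moore determinant is a unit
    haveI : Nontrivial (R ⧸ I) := ⟨hfield.exists_pair_ne⟩
    haveI : CharP (R ⧸ I) p := by
      rw [CharP.charP_iff_prime_eq_zero hp]
      rw [← map_natCast mk p, Ideal.Quotient.eq_zero_iff_mem]
      exact Ideal.mem_span_singleton_self _
    letI : Field (R ⧸ I) := hfield.toField
    -- reduction mod p of iterates of σ
    have hiter : ∀ (j : ℕ) (x : R), mk ((⇑σ)^[j] x) = (mk x) ^ p ^ j := by
      intro j
      induction j with
      | zero => intro x; simp
      | succ j ih =>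
        intro x
        rw [Function.iterate_succ_apply' (⇑σ), hσ]
        obtain ⟨φ, hφ⟩ := hhom j
        calc mk ((⇑σ)^[j] x ^ p) = mk ((⇑σ)^[j] x) ^ p := by rw [map_pow]
          _ = ((mk x) ^ p ^ j) ^ p := by rw [ih]
          _ = (mk x) ^ p ^ (j + 1) := by rw [← pow_mul, pow_succ]
    set zb : Fin k → R ⧸ I := fun i => mk (z i) with hzb
    -- injectivity over 𝔽_p
    have hinj : Function.Injective fun cc : Fin k → ZMod p => ∑ i, (cc i).val • zb i := by
      intro cc cc' hcc
      have hmem : (∑ i, (((cc i).val : ℤ) - ((cc' i).val : ℤ)) • z i) ∈ I := by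
        rw [← Ideal.Quotient.eq_zero_iff_mem]
        have : mk (∑ i, (((cc i).val : ℤ) - ((cc' i).val : ℤ)) • z i)
            = ∑ i, (cc i).val • zb i - ∑ i, (cc' i).val • zb i := by
          rw [map_sum, ← Finset.sum_sub_distrib]
          refine Finset.sum_congr rfl fun i _ => ?_
          rw [sub_smul, map_sub]
          congr 1 <;> rw [natCast_zsmul, map_nsmul] <;> rfl
        rw [this]
        exact sub_eq_zero_of_eq hcc
      have h0 := hz _ hmem
      funext i
      have hi := h0 i
      push_cast at hi
      rwa [ZMod.natCast_val, ZMod.natCast_val, ZMod.cast_id, ZMod.cast_id,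
        sub_eq_zero] at hi
    -- reduce the Moore determinant mod p
    set d : R := Matrix.det (Matrix.of fun i j : Fin k => (⇑σ)^[(j : ℕ)] (z i)) with hd
    have hmkd : mk d = (Matrix.of fun i j : Fin k => zb i ^ p ^ (j : ℕ)).det := by
      rw [hd, RingHom.map_det]
      congr 1
      ext i j
      simp [Matrix.map_apply, hiter, hzb]
    have hne : mk d ≠ 0 := by
      rw [hmkd]
      exact moore_det_ne_zero p k zb hinj
    obtain ⟨v, hv⟩ := hfield.mul_inv_cancel hne
    obtain ⟨b, rfl⟩ := Ideal.Quotient.mk_surjective v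
    have hmem : d * b - 1 ∈ I := by
      rw [← Ideal.Quotient.eq_zero_iff_mem]
      rw [map_sub, map_mul, map_one]
      rw [show Ideal.Quotient.mk I d = mk d from rfl,
        show Ideal.Quotient.mk I b = mk b from rfl, hv, sub_self]
    have hub : IsUnit (d * b) :=
      Ideal.isUnit_of_sub_one_mem_jacobson_bot _ (IsAdicComplete.le_jacobson_bot I hmem)
    exact isUnit_of_mul_isUnit_left hub
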